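/- Let r > 0 be real. The subgroup Γ of GL₃(ℂ) generated by h_X and h_Y is discrete: every element of Γ is an isolated point of Γ in the topology of 3×3 complex matrices (equivalently, there is ε > 0 such that any two distinct elements of Γ are at distance at least ε). -/

import Mathlib

open Matrix Complex

/-- The holonomy matrix `h_X`. -/
noncomputable def hX (r : ℝ) : Matrix (Fin 3) (Fin 3) ℂ :=
  !![1, 0, 0; (r : ℂ), 0, 1; (r : ℂ), -1, 0]

/-- The holonomy matrix `h_Y`. -/
noncomputable def hY (r : ℝ) : Matrix (Fin 3) (Fin 3) ℂ :=
  !![1, 0, 0; -Complex.I * (r : ℂ), 0, -Complex.I; (r : ℂ), -Complex.I, 0]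

/-- The subgroup `Γ` of `GL₃(ℂ)` generated by `h_X` and `h_Y`. -/
noncomputable def Γgp (r : ℝ) : Subgroup (GL (Fin 3) ℂ) :=
  Subgroup.closure
    {g : GL (Fin 3) ℂ |
      (g : Matrix (Fin 3) (Fin 3) ℂ) = hX r ∨ (g : Matrix (Fin 3) (Fin 3) ℂ) = hY r}

/-- Gaussian integers inside ℂ. -/
def Gz (z : ℂ) : Prop := ∃ a b : ℤ, z = a + b * Complex.I

/-- `r` times a Gaussian integer. -/
def Grz (r : ℝ) (z : ℂ) : Prop := ∃ a b : ℤ, z = r * (a + b * Complex.I)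

lemma Gz.add {z w : ℂ} (hz : Gz z) (hw : Gz w) : Gz (z + w) := by
  obtain ⟨a, b, rfl⟩ := hz; obtain ⟨c, d, rfl⟩ := hw
  exact ⟨a + c, b + d, by push_cast; ring⟩

lemma Gz.mul {z w : ℂ} (hz : Gz z) (hw : Gz w) : Gz (z * w) := by
  obtain ⟨a, b, rfl⟩ := hz; obtain ⟨c, d, rfl⟩ := hw
  exact ⟨a * c - b * d, a * d + b * c, by push_cast; ring_nf; rw [Complex.I_sq]; ring⟩

lemma Gz.neg {z : ℂ} (hz : Gz z) : Gz (-z) := by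
  obtain ⟨a, b, rfl⟩ := hz; exact ⟨-a, -b, by push_cast; ring⟩

lemma Grz.add {r : ℝ} {z w : ℂ} (hz : Grz r z) (hw : Grz r w) : Grz r (z + w) := by
  obtain ⟨a, b, rfl⟩ := hz; obtain ⟨c, d, rfl⟩ := hw
  exact ⟨a + c, b + d, by push_cast; ring⟩

lemma Grz.neg {r : ℝ} {z : ℂ} (hz : Grz r z) : Grz r (-z) := by
  obtain ⟨a, b, rfl⟩ := hz; exact ⟨-a, -b, by push_cast; ring⟩

lemma Gz.mul_grz {r : ℝ} {z w : ℂ} (hz : Gz z) (hw : Grz r w) : Grz r (z * w) := by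
  obtain ⟨a, b, rfl⟩ := hz; obtain ⟨c, d, rfl⟩ := hw
  obtain ⟨e, f, h⟩ := Gz.mul ⟨a, b, rfl⟩ (⟨c, d, rfl⟩ : Gz _)
  exact ⟨e, f, by rw [show (↑a + ↑b * I) * (↑r * (↑c + ↑d * I)) = ↑r * ((↑a + ↑b * I) * (↑c + ↑d * I)) by ring, h]⟩

/-- The invariant preserved by Γ. -/
def Pm (r : ℝ) (m : Matrix (Fin 3) (Fin 3) ℂ) : Prop :=
  m 0 0 = 1 ∧ m 0 1 = 0 ∧ m 0 2 = 0 ∧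
  Grz r (m 1 0) ∧ Grz r (m 2 0) ∧
  Gz (m 1 1) ∧ Gz (m 1 2) ∧ Gz (m 2 1) ∧ Gz (m 2 2) ∧ m.det = 1

lemma Pm_mul {r : ℝ} {m n : Matrix (Fin 3) (Fin 3) ℂ} (hm : Pm r m) (hn : Pm r n) :
    Pm r (m * n) := by
  obtain ⟨h00, h01, h02, h10, h20, h11, h12, h21, h22, hdet⟩ := hm
  obtain ⟨k00, k01, k02, k10, k20, k11, k12, k21, k22, kdet⟩ := hn
  have e : ∀ i j, (m * n) i j = m i 0 * n 0 j + m i 1 * n 1 j + m i 2 * n 2 j := by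
    intro i j
    simp [Matrix.mul_apply, Fin.sum_univ_three]
  refine ⟨?_, ?_, ?_, ?_, ?_, ?_, ?_, ?_, ?_, ?_⟩
  · rw [e, h00, h01, h02, k00]; ring
  · rw [e, h00, h01, h02, k01]; ring
  · rw [e, h00, h01, h02, k02]; ring
  · rw [e, k00]
    have : m 1 0 * 1 + m 1 1 * n 1 0 + m 1 2 * n 2 0
        = m 1 0 + (m 1 1 * n 1 0 + m 1 2 * n 2 0) := by ring
    rw [this]
    exact h10.add ((h11.mul_grz k10).add (h12.mul_grz k20))
  · rw [e, k00]
    have : m 2 0 * 1 + m 2 1 * n 1 0 + m 2 2 * n 2 0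
        = m 2 0 + (m 2 1 * n 1 0 + m 2 2 * n 2 0) := by ring
    rw [this]
    exact h20.add ((h21.mul_grz k10).add (h22.mul_grz k20))
  · rw [e, k01]
    have : m 1 0 * 0 + m 1 1 * n 1 1 + m 1 2 * n 2 1 = m 1 1 * n 1 1 + m 1 2 * n 2 1 := by ring
    rw [this]; exact (h11.mul k11).add (h12.mul k21)
  · rw [e, k02]
    have : m 1 0 * 0 + m 1 1 * n 1 2 + m 1 2 * n 2 2 = m 1 1 * n 1 2 + m 1 2 * n 2 2 := by ring
    rw [this]; exact (h11.mul k12).add (h12.mul k22)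
  · rw [e, k01]
    have : m 2 0 * 0 + m 2 1 * n 1 1 + m 2 2 * n 2 1 = m 2 1 * n 1 1 + m 2 2 * n 2 1 := by ring
    rw [this]; exact (h21.mul k11).add (h22.mul k21)
  · rw [e, k02]
    have : m 2 0 * 0 + m 2 1 * n 1 2 + m 2 2 * n 2 2 = m 2 1 * n 1 2 + m 2 2 * n 2 2 := by ring
    rw [this]; exact (h21.mul k12).add (h22.mul k22)
  · rw [Matrix.det_mul, hdet, kdet, one_mul]

example : True := trivial

lemma Grz.of_eq {r : ℝ} {z w : ℂ} (hz : Grz r z) (h : w = z) : Grz r w := h ▸ hz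
lemma Gz.of_eq {z w : ℂ} (hz : Gz z) (h : w = z) : Gz w := h ▸ hz

lemma key_det {m : Matrix (Fin 3) (Fin 3) ℂ} (h00 : m 0 0 = 1) (h01 : m 0 1 = 0)
    (h02 : m 0 2 = 0) (hdet : m.det = 1) :
    m 1 1 * m 2 2 - m 1 2 * m 2 1 = 1 := by
  rw [Matrix.det_fin_three, h00, h01, h02] at hdet
  linear_combination hdet

lemma Pm_adjugate {r : ℝ} {m : Matrix (Fin 3) (Fin 3) ℂ} (hm : Pm r m) :
    Pm r m.adjugate := by
  obtain ⟨h00, h01, h02, h10, h20, h11, h12, h21, h22, hdet⟩ := hm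
  have ha := Matrix.adjugate_fin_three m
  have a00 : m.adjugate 0 0 = m 1 1 * m 2 2 - m 1 2 * m 2 1 := by rw [ha]; simp
  have a01 : m.adjugate 0 1 = -(m 0 1 * m 2 2) + m 0 2 * m 2 1 := by rw [ha]; simp
  have a02 : m.adjugate 0 2 = m 0 1 * m 1 2 - m 0 2 * m 1 1 := by rw [ha]; simp
  have a10 : m.adjugate 1 0 = -(m 1 0 * m 2 2) + m 1 2 * m 2 0 := by rw [ha]; simp
  have a11 : m.adjugate 1 1 = m 0 0 * m 2 2 - m 0 2 * m 2 0 := by rw [ha]; simp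
  have a12 : m.adjugate 1 2 = -(m 0 0 * m 1 2) + m 0 2 * m 1 0 := by rw [ha]; simp
  have a20 : m.adjugate 2 0 = m 1 0 * m 2 1 - m 1 1 * m 2 0 := by rw [ha]; simp
  have a21 : m.adjugate 2 1 = -(m 0 0 * m 2 1) + m 0 1 * m 2 0 := by rw [ha]; simp
  have a22 : m.adjugate 2 2 = m 0 0 * m 1 1 - m 0 1 * m 1 0 := by rw [ha]; simp
  refine ⟨?_, ?_, ?_, ?_, ?_, ?_, ?_, ?_, ?_, ?_⟩
  · rw [a00]; exact key_det h00 h01 h02 hdet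
  · rw [a01, h01, h02]; ring
  · rw [a02, h01, h02]; ring
  · rw [a10]
    exact (((h22.mul_grz h10).neg).add (h12.mul_grz h20)).of_eq (by ring)
  · rw [a20]
    exact ((h21.mul_grz h10).add ((h11.mul_grz h20).neg)).of_eq (by ring)
  · rw [a11, h00, h02]; exact h22.of_eq (by ring)
  · rw [a12, h00, h02]; exact h12.neg.of_eq (by ring)
  · rw [a21, h00, h01]; exact h21.neg.of_eq (by ring)
  · rw [a22, h00, h01]; exact h11.of_eq (by ring)
  · rw [Matrix.det_adjugate, hdet, one_pow]

lemma Pm_hX (r : ℝ) : Pm r (hX r) := by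
  refine ⟨by simp [hX, Matrix.vecHead, Matrix.vecTail], by simp [hX, Matrix.vecHead, Matrix.vecTail], by simp [hX, Matrix.vecHead, Matrix.vecTail], ?_, ?_, ?_, ?_, ?_, ?_, ?_⟩
  · exact ⟨1, 0, by simp [hX, Matrix.vecHead, Matrix.vecTail]⟩
  · exact ⟨1, 0, by simp [hX, Matrix.vecHead, Matrix.vecTail]⟩
  · exact ⟨0, 0, by simp [hX, Matrix.vecHead, Matrix.vecTail]⟩
  · exact ⟨1, 0, by simp [hX, Matrix.vecHead, Matrix.vecTail]⟩
  · exact ⟨-1, 0, by simp [hX, Matrix.vecHead, Matrix.vecTail]⟩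
  · exact ⟨0, 0, by simp [hX, Matrix.vecHead, Matrix.vecTail]⟩
  · simp [hX, Matrix.det_fin_three]

lemma Pm_hY (r : ℝ) : Pm r (hY r) := by
  refine ⟨by simp [hY, Matrix.vecHead, Matrix.vecTail], by simp [hY, Matrix.vecHead, Matrix.vecTail], by simp [hY, Matrix.vecHead, Matrix.vecTail], ?_, ?_, ?_, ?_, ?_, ?_, ?_⟩
  · exact ⟨0, -1, by simp [hY, Matrix.vecHead, Matrix.vecTail]; try ring⟩
  · exact ⟨1, 0, by simp [hY, Matrix.vecHead, Matrix.vecTail]⟩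
  · exact ⟨0, 0, by simp [hY, Matrix.vecHead, Matrix.vecTail]⟩
  · exact ⟨0, -1, by simp [hY, Matrix.vecHead, Matrix.vecTail]; try ring⟩
  · exact ⟨0, -1, by simp [hY, Matrix.vecHead, Matrix.vecTail]; try ring⟩
  · exact ⟨0, 0, by simp [hY, Matrix.vecHead, Matrix.vecTail]⟩
  · simp [hY, Matrix.det_fin_three]

lemma Pm_one (r : ℝ) : Pm r (1 : Matrix (Fin 3) (Fin 3) ℂ) := by
  refine ⟨by simp, by simp, by simp, ?_, ?_, ?_, ?_, ?_, ?_, by simp⟩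
  · exact ⟨0, 0, by simp [Matrix.one_apply]⟩
  · exact ⟨0, 0, by simp [Matrix.one_apply]⟩
  · exact ⟨1, 0, by simp [Matrix.one_apply]⟩
  · exact ⟨0, 0, by simp [Matrix.one_apply]⟩
  · exact ⟨0, 0, by simp [Matrix.one_apply]⟩
  · exact ⟨1, 0, by simp [Matrix.one_apply]⟩

lemma Pm_of_mem {r : ℝ} {g : GL (Fin 3) ℂ} (hg : g ∈ Γgp r) :
    Pm r (g : Matrix (Fin 3) (Fin 3) ℂ) := by
  induction hg using Subgroup.closure_induction with
  | mem x hx => rcases hx with h | h <;> rw [h]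
                exacts [Pm_hX r, Pm_hY r]
  | one => exact Pm_one r
  | mul x y hx hy px py => rw [Units.val_mul]; exact Pm_mul px py
  | inv x hx px =>
      have hc : ((x⁻¹ : GL (Fin 3) ℂ) : Matrix (Fin 3) (Fin 3) ℂ)
          = (x : Matrix (Fin 3) (Fin 3) ℂ)⁻¹ := Matrix.coe_units_inv x
      rw [hc, Matrix.inv_def, px.2.2.2.2.2.2.2.2.2, Ring.inverse_one, one_smul]
      exact Pm_adjugate px

lemma gz_sep {z w : ℂ} (hz : Gz z) (hw : Gz w) (h : ‖z - w‖ < 1) : z = w := by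
  obtain ⟨a, b, rfl⟩ := hz; obtain ⟨c, d, rfl⟩ := hw
  by_contra hne
  have hd : (↑a + ↑b * I) - (↑c + ↑d * I) = ((a - c : ℤ) : ℝ) + ((b - d : ℤ) : ℝ) * I := by
    push_cast; ring
  have habs : (‖((↑a + ↑b * I) - (↑c + ↑d * I) : ℂ)‖)^2
      = ((a - c : ℤ) : ℝ)^2 + ((b - d : ℤ) : ℝ)^2 := by
    rw [hd, Complex.sq_norm, Complex.normSq_add_mul_I]
  have hne2 : a - c ≠ 0 ∨ b - d ≠ 0 := by
    by_contra hcon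
    push_neg at hcon
    exact hne (by rw [show a = c by omega, show b = d by omega])
  have hone : (1 : ℤ) ≤ (a - c)^2 + (b - d)^2 := by
    rcases hne2 with h' | h' <;> nlinarith [sq_nonneg (a - c), sq_nonneg (b - d),
      Int.one_le_abs h', _root_.sq_abs (a - c), _root_.sq_abs (b - d)]
  have hone' : (1 : ℝ) ≤ ((a - c : ℤ) : ℝ)^2 + ((b - d : ℤ) : ℝ)^2 := by exact_mod_cast hone
  nlinarith [norm_nonneg ((↑a + ↑b * I) - (↑c + ↑d * I) : ℂ)]

lemma grz_sep {r : ℝ} (hr : 0 < r) {z w : ℂ} (hz : Grz r z) (hw : Grz r w)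
    (h : ‖z - w‖ < r) : z = w := by
  obtain ⟨a, b, rfl⟩ := hz; obtain ⟨c, d, rfl⟩ := hw
  have hd : (↑r * (↑a + ↑b * I)) - (↑r * (↑c + ↑d * I))
      = (r : ℂ) * ((↑a + ↑b * I) - (↑c + ↑d * I)) := by ring
  have : ‖((↑a + ↑b * I) - (↑c + ↑d * I) : ℂ)‖ < 1 := by
    rw [hd, norm_mul, Complex.norm_real, Real.norm_eq_abs, abs_of_pos hr] at h
    nlinarith [norm_nonneg ((↑a + ↑b * I) - (↑c + ↑d * I) : ℂ)]
  have := gz_sep ⟨a, b, rfl⟩ ⟨c, d, rfl⟩ this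
  rw [this]

/-- For `r > 0`, the subgroup `Γ` generated by `h_X` and `h_Y` is discrete:
every element of `Γ` is an isolated point of `Γ` in the topology of `3×3`
complex matrices. -/
theorem gamma_discrete (r : ℝ) (hr : 0 < r) :
    ∀ g ∈ Γgp r, ∃ U : Set (Matrix (Fin 3) (Fin 3) ℂ), IsOpen U ∧
      (g : Matrix (Fin 3) (Fin 3) ℂ) ∈ U ∧
      ∀ g' ∈ Γgp r, (g' : Matrix (Fin 3) (Fin 3) ℂ) ∈ U → g' = g := by
  intro g hg
  set ε := min r 1 with hεdef
  have hε : 0 < ε := lt_min hr one_pos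
  refine ⟨⋂ i, ⋂ j, (fun m : Matrix (Fin 3) (Fin 3) ℂ => m i j) ⁻¹'
      Metric.ball ((g : Matrix (Fin 3) (Fin 3) ℂ) i j) ε, ?_, ?_, ?_⟩
  · exact isOpen_iInter_of_finite fun i => isOpen_iInter_of_finite fun j =>
      Metric.isOpen_ball.preimage ((continuous_apply j).comp (continuous_apply i))
  · simp [Metric.mem_ball, hε]
  · intro g' hg' hU
    have hU' : ∀ i j, ‖(g' : Matrix (Fin 3) (Fin 3) ℂ) i j
        - (g : Matrix (Fin 3) (Fin 3) ℂ) i j‖ < ε := by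
      intro i j
      have := Set.mem_iInter.1 (Set.mem_iInter.1 hU i) j
      simpa [Metric.mem_ball, Complex.dist_eq] using this
    obtain ⟨p00, p01, p02, p10, p20, p11, p12, p21, p22, _⟩ := Pm_of_mem hg'
    obtain ⟨q00, q01, q02, q10, q20, q11, q12, q21, q22, _⟩ := Pm_of_mem hg
    have hlr : ∀ z : ℂ, ‖z‖ < ε → ‖z‖ < r :=
      fun z h => lt_of_lt_of_le h (min_le_left _ _)
    have hl1 : ∀ z : ℂ, ‖z‖ < ε → ‖z‖ < 1 :=
      fun z h => lt_of_lt_of_le h (min_le_right _ _)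
    apply Units.ext
    ext i j
    fin_cases i <;> fin_cases j
    · exact p00.trans q00.symm
    · exact p01.trans q01.symm
    · exact p02.trans q02.symm
    · exact grz_sep hr p10 q10 (hlr _ (hU' 1 0))
    · exact gz_sep p11 q11 (hl1 _ (hU' 1 1))
    · exact gz_sep p12 q12 (hl1 _ (hU' 1 2))
    · exact grz_sep hr p20 q20 (hlr _ (hU' 2 0))
    · exact gz_sep p21 q21 (hl1 _ (hU' 2 1))
    · exact gz_sep p22 q22 (hl1 _ (hU' 2 2))
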